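/- Let h : [0,1] → ℝ be continuous and x ∈ (0,1). Then ∫₀¹ β_α(t,x) h(t) dt → h(x) as α → ∞, where β_α(t,x) = t^{⌊αx⌋}(1−t)^{α−⌊αx⌋}/B(⌊αx⌋+1, α−⌊αx⌋+1). -/

import Mathlib

open MeasureTheory Filter

/-- The Beta function `B(u,v) = Γ(u)Γ(v)/Γ(u+v)`. -/
noncomputable def betaFn (u v : ℝ) : ℝ :=
  Real.Gamma u * Real.Gamma v / Real.Gamma (u + v)

/-- The beta kernel `β_α(t,x) = t^⌊αx⌋ (1−t)^(α−⌊αx⌋) / B(⌊αx⌋+1, α−⌊αx⌋+1)`. -/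
noncomputable def betaKer (α : ℕ) (x t : ℝ) : ℝ :=
  t ^ ⌊(α : ℝ) * x⌋₊ * (1 - t) ^ (α - ⌊(α : ℝ) * x⌋₊) /
    betaFn ((⌊(α : ℝ) * x⌋₊ : ℝ) + 1) (((α - ⌊(α : ℝ) * x⌋₊ : ℕ) : ℝ) + 1)

open Nat

lemma J_eq (k m : ℕ) : ∫ t in (0:ℝ)..1, t ^ k * (1 - t) ^ m
    = (k ! * m ! : ℝ) / (k + m + 1)! := by
  have h := Complex.Gamma_mul_Gamma_eq_betaIntegral
    (s := (k : ℂ) + 1) (t := (m : ℂ) + 1) (by simp; positivity) (by simp; positivity)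
  rw [Complex.betaIntegral] at h
  simp only [add_sub_cancel_right, Complex.cpow_natCast] at h
  have hre : (∫ x in (0:ℝ)..1, (x : ℂ) ^ k * (1 - (x:ℂ)) ^ m)
      = ((∫ t in (0:ℝ)..1, t ^ k * (1 - t) ^ m : ℝ) : ℂ) := by
    rw [← intervalIntegral.integral_ofReal]
    norm_num
  rw [hre, Complex.Gamma_nat_eq_factorial, Complex.Gamma_nat_eq_factorial] at h
  have h2 : ((k:ℂ) + 1 + ((m:ℂ) + 1)) = ((k + m + 1 : ℕ) : ℂ) + 1 := by push_cast; ring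
  rw [h2, Complex.Gamma_nat_eq_factorial] at h
  have hne : ((k + m + 1)! : ℂ) ≠ 0 := by exact_mod_cast (k+m+1).factorial_ne_zero
  field_simp
  rw [mul_comm]
  exact_mod_cast h.symm

lemma J_pos (k m : ℕ) : 0 < ∫ t in (0:ℝ)..1, t ^ k * (1 - t) ^ m := by
  rw [J_eq]
  have h1 : (0:ℝ) < k ! := by exact_mod_cast k.factorial_pos
  have h2 : (0:ℝ) < m ! := by exact_mod_cast m.factorial_pos
  have h3 : (0:ℝ) < (k+m+1)! := by exact_mod_cast (k+m+1).factorial_pos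
  positivity

lemma S1_eq (k m : ℕ) : (∫ t in (0:ℝ)..1, t ^ (k+1) * (1 - t) ^ m)
    = (((k:ℝ)+1)/((k:ℝ)+m+2)) * ∫ t in (0:ℝ)..1, t ^ k * (1 - t) ^ m := by
  rw [J_eq, J_eq, show k+1+m+1 = (k+m+1)+1 by omega, factorial_succ (k+m+1), factorial_succ k]
  have h3 : ((k+m+1)! : ℝ) ≠ 0 := by exact_mod_cast (k+m+1).factorial_ne_zero
  have h4 : ((k:ℝ)+m+2) ≠ 0 := by positivity
  field_simp
  push_cast
  ring

lemma S2_eq (k m : ℕ) : (∫ t in (0:ℝ)..1, t ^ (k+2) * (1 - t) ^ m)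
    = ((((k:ℝ)+1)*((k:ℝ)+2))/((((k:ℝ)+m+2))*(((k:ℝ)+m+3)))) *
      ∫ t in (0:ℝ)..1, t ^ k * (1 - t) ^ m := by
  rw [J_eq, J_eq, show k+2+m+1 = ((k+m+1)+1)+1 by omega, factorial_succ ((k+m+1)+1),
    factorial_succ (k+m+1), show k+2 = (k+1)+1 by omega, factorial_succ (k+1), factorial_succ k]
  have h3 : ((k+m+1)! : ℝ) ≠ 0 := by exact_mod_cast (k+m+1).factorial_ne_zero
  have h4 : ((k:ℝ)+m+2) ≠ 0 := by positivity
  have h5 : ((k:ℝ)+m+3) ≠ 0 := by positivity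
  field_simp
  push_cast
  ring

lemma betaFn_nat (k m : ℕ) : betaFn ((k:ℝ)+1) ((m:ℝ)+1) = (k ! * m ! : ℝ) / (k+m+1)! := by
  unfold betaFn
  rw [Real.Gamma_nat_eq_factorial, Real.Gamma_nat_eq_factorial,
    show ((k:ℝ)+1+((m:ℝ)+1)) = ((k+m+1:ℕ):ℝ)+1 by push_cast; ring, Real.Gamma_nat_eq_factorial]

lemma hkle (x : ℝ) (hx1 : x ≤ 1) (α : ℕ) : ⌊(α:ℝ)*x⌋₊ ≤ α := by
  calc ⌊(α:ℝ)*x⌋₊ ≤ ⌊(α:ℝ)⌋₊ := Nat.floor_le_floor (by nlinarith [Nat.cast_nonneg (α := ℝ) α])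
  _ = α := Nat.floor_natCast α

lemma betaKer_eq (x : ℝ) (α : ℕ) (t : ℝ) :
    betaKer α x t = t ^ ⌊(α:ℝ)*x⌋₊ * (1-t) ^ (α - ⌊(α:ℝ)*x⌋₊) /
      ∫ s in (0:ℝ)..1, s ^ ⌊(α:ℝ)*x⌋₊ * (1-s) ^ (α - ⌊(α:ℝ)*x⌋₊) := by
  unfold betaKer
  rw [betaFn_nat, J_eq]

lemma betaKer_cont (x : ℝ) (α : ℕ) : Continuous (betaKer α x) := by
  have : betaKer α x = fun t => t ^ ⌊(α:ℝ)*x⌋₊ * (1-t) ^ (α - ⌊(α:ℝ)*x⌋₊) /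
      ∫ s in (0:ℝ)..1, s ^ ⌊(α:ℝ)*x⌋₊ * (1-s) ^ (α - ⌊(α:ℝ)*x⌋₊) := funext (betaKer_eq x α)
  rw [this]
  exact ((continuous_pow _).mul ((continuous_const.sub continuous_id).pow _)).div_const _

lemma betaKer_nonneg (x : ℝ) (α : ℕ) {t : ℝ} (ht : t ∈ Set.Icc (0:ℝ) 1) :
    0 ≤ betaKer α x t := by
  rw [betaKer_eq]
  have := J_pos ⌊(α:ℝ)*x⌋₊ (α - ⌊(α:ℝ)*x⌋₊)
  have h1 : (0:ℝ) ≤ t := ht.1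
  have h2 : (0:ℝ) ≤ 1 - t := by linarith [ht.2]
  positivity

lemma betaKer_int_one (x : ℝ) (α : ℕ) : (∫ t in (0:ℝ)..1, betaKer α x t) = 1 := by
  simp_rw [betaKer_eq x α]
  rw [intervalIntegral.integral_div, div_self (J_pos _ _).ne']

lemma betaKer_int_t (x : ℝ) (hx1 : x ≤ 1) (α : ℕ) :
    (∫ t in (0:ℝ)..1, betaKer α x t * t)
      = ((⌊(α:ℝ)*x⌋₊:ℝ)+1)/((α:ℝ)+2) := by
  set K := ⌊(α:ℝ)*x⌋₊ with hK
  set M := α - K with hM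
  have hKM : (K:ℝ) + (M:ℝ) = (α:ℝ) := by
    have := Nat.add_sub_cancel' (hkle x hx1 α)
    exact_mod_cast congrArg (Nat.cast (R := ℝ)) this
  have hpt : ∀ t : ℝ, betaKer α x t * t
      = t ^ (K+1) * (1-t) ^ M / ∫ s in (0:ℝ)..1, s ^ K * (1-s) ^ M := by
    intro t
    rw [betaKer_eq, pow_succ]
    ring
  simp_rw [hpt]
  rw [intervalIntegral.integral_div, S1_eq,
    mul_div_assoc, div_self (J_pos _ _).ne', mul_one, hKM]

lemma betaKer_int_t2 (x : ℝ) (hx1 : x ≤ 1) (α : ℕ) :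
    (∫ t in (0:ℝ)..1, betaKer α x t * t^2)
      = ((⌊(α:ℝ)*x⌋₊:ℝ)+1)*((⌊(α:ℝ)*x⌋₊:ℝ)+2)/(((α:ℝ)+2)*((α:ℝ)+3)) := by
  set K := ⌊(α:ℝ)*x⌋₊ with hK
  set M := α - K with hM
  have hKM : (K:ℝ) + (M:ℝ) = (α:ℝ) := by
    have := Nat.add_sub_cancel' (hkle x hx1 α)
    exact_mod_cast congrArg (Nat.cast (R := ℝ)) this
  have hpt : ∀ t : ℝ, betaKer α x t * t^2
      = t ^ (K+2) * (1-t) ^ M / ∫ s in (0:ℝ)..1, s ^ K * (1-s) ^ M := by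
    intro t
    rw [betaKer_eq, pow_add]
    ring
  simp_rw [hpt]
  rw [intervalIntegral.integral_div, S2_eq,
    mul_div_assoc, div_self (J_pos _ _).ne', mul_one, hKM]

lemma betaKer_var (x : ℝ) (hx1 : x ≤ 1) (α : ℕ) :
    (∫ t in (0:ℝ)..1, betaKer α x t * (t-x)^2)
      = ((⌊(α:ℝ)*x⌋₊:ℝ)+1)*((⌊(α:ℝ)*x⌋₊:ℝ)+2)/(((α:ℝ)+2)*((α:ℝ)+3))
        - 2*x*(((⌊(α:ℝ)*x⌋₊:ℝ)+1)/((α:ℝ)+2)) + x^2 := by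
  have hc := betaKer_cont x α
  have i2 : IntervalIntegrable (fun t => betaKer α x t * t^2) volume 0 1 :=
    (hc.mul (continuous_pow 2)).intervalIntegrable 0 1
  have i1 : IntervalIntegrable (fun t => 2*x*(betaKer α x t * t)) volume 0 1 :=
    (continuous_const.mul (hc.mul continuous_id)).intervalIntegrable 0 1
  have i0 : IntervalIntegrable (fun t => x^2 * betaKer α x t) volume 0 1 :=
    (continuous_const.mul hc).intervalIntegrable 0 1
  have hpt : (fun t => betaKer α x t * (t-x)^2)
      = fun t => (betaKer α x t * t^2 - 2*x*(betaKer α x t * t)) + x^2 * betaKer α x t :=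
    funext fun t => by ring
  rw [hpt, intervalIntegral.integral_add (i2.sub i1) i0,
    intervalIntegral.integral_sub i2 i1, intervalIntegral.integral_const_mul,
    intervalIntegral.integral_const_mul, betaKer_int_one, betaKer_int_t x hx1,
    betaKer_int_t2 x hx1, mul_one]

lemma inv_add_tendsto (c : ℝ) : Tendsto (fun α : ℕ => 1/((α:ℝ)+c)) atTop (nhds 0) := by
  simp_rw [one_div]
  exact (tendsto_atTop_add_const_right atTop c tendsto_natCast_atTop_atTop).inv_tendsto_atTop

lemma q_tendsto (x : ℝ) (hx0 : 0 ≤ x) (hx1 : x ≤ 1) (a : ℝ) (ha : 1 ≤ a) :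
    Tendsto (fun α : ℕ => ((⌊(α:ℝ)*x⌋₊:ℝ) + a)/((α:ℝ)+(a+1))) atTop (nhds x) := by
  have hlow : Tendsto (fun α : ℕ => x * ((α:ℝ)/((α:ℝ)+(a+1)))) atTop (nhds x) := by
    have := (tendsto_natCast_div_add_atTop (𝕜 := ℝ) (a+1)).const_mul x
    simpa using this
  have hhigh : Tendsto (fun α : ℕ => x * ((α:ℝ)/((α:ℝ)+(a+1))) + a * (1/((α:ℝ)+(a+1))))
      atTop (nhds x) := by
    have := hlow.add ((inv_add_tendsto (a+1)).const_mul a)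
    simpa using this
  refine tendsto_of_tendsto_of_tendsto_of_le_of_le hlow hhigh (fun α => ?_) (fun α => ?_)
  · have hd : (0:ℝ) < (α:ℝ)+(a+1) := by positivity
    have h1 : (α:ℝ)*x < (⌊(α:ℝ)*x⌋₊:ℝ)+1 := Nat.lt_floor_add_one _
    rw [mul_div_assoc']
    gcongr
    nlinarith
  · have hd : (0:ℝ) < (α:ℝ)+(a+1) := by positivity
    have h2 : (⌊(α:ℝ)*x⌋₊:ℝ) ≤ (α:ℝ)*x := Nat.floor_le (by positivity)
    rw [mul_div_assoc', mul_one_div, ← add_div]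
    gcongr
    nlinarith

lemma var_tendsto (x : ℝ) (hx0 : 0 ≤ x) (hx1 : x ≤ 1) :
    Tendsto (fun α : ℕ => ∫ t in (0:ℝ)..1, betaKer α x t * (t-x)^2) atTop (nhds 0) := by
  have hq1 : Tendsto (fun α : ℕ => ((⌊(α:ℝ)*x⌋₊:ℝ)+1)/((α:ℝ)+2)) atTop (nhds x) := by
    have := q_tendsto x hx0 hx1 1 le_rfl
    norm_num at this
    exact this
  have hq2 : Tendsto (fun α : ℕ => ((⌊(α:ℝ)*x⌋₊:ℝ)+2)/((α:ℝ)+3)) atTop (nhds x) := by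
    have := q_tendsto x hx0 hx1 2 one_le_two
    norm_num at this
    exact this
  have hmain := ((hq1.mul hq2).sub (hq1.const_mul (2*x))).add
    (tendsto_const_nhds (x := x^2) (f := atTop (α := ℕ)))
  have heq : (fun α : ℕ => ∫ t in (0:ℝ)..1, betaKer α x t * (t-x)^2)
      = fun α : ℕ => (((⌊(α:ℝ)*x⌋₊:ℝ)+1)/((α:ℝ)+2) * (((⌊(α:ℝ)*x⌋₊:ℝ)+2)/((α:ℝ)+3))
          - 2*x*(((⌊(α:ℝ)*x⌋₊:ℝ)+1)/((α:ℝ)+2))) + x^2 :=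
    funext fun α => by rw [betaKer_var x hx1 α]; congr 2; exact (div_mul_div_comm _ _ _ _).symm
  rw [heq, show (0:ℝ) = (x*x - 2*x*(x)) + x^2 by ring]
  exact hmain

theorem stmt_16 (h : ℝ → ℝ) (hh : ContinuousOn h (Set.Icc (0:ℝ) 1))
    (x : ℝ) (hx : x ∈ Set.Ioo (0:ℝ) 1) :
    Tendsto (fun α : ℕ => ∫ t in (0:ℝ)..1, betaKer α x t * h t)
      atTop (nhds (h x)) := by
  obtain ⟨hx0, hx1⟩ := hx
  have hxI : x ∈ Set.Icc (0:ℝ) 1 := ⟨hx0.le, hx1.le⟩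
  have hu : Set.uIcc (0:ℝ) 1 = Set.Icc (0:ℝ) 1 := Set.uIcc_of_le zero_le_one
  -- bound for h
  obtain ⟨M, hM⟩ := (isCompact_Icc (a := (0:ℝ)) (b := 1)).exists_bound_of_continuousOn hh
  have hM0 : 0 ≤ M := le_trans (norm_nonneg _) (hM 0 (by norm_num))
  -- uniform continuity
  have huc : UniformContinuousOn h (Set.Icc 0 1) :=
    (isCompact_Icc).uniformContinuousOn_of_continuous hh
  rw [Metric.uniformContinuousOn_iff] at huc
  rw [Metric.tendsto_atTop]
  intro ε hε
  obtain ⟨δ, hδ0, hδ⟩ := huc (ε/2) (by positivity)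
  set c : ℝ := (2*M+2)/δ^2 with hc
  have hc0 : 0 < c := by positivity
  -- pointwise bound
  have hpt : ∀ t ∈ Set.Icc (0:ℝ) 1, |h t - h x| ≤ ε/2 + c*(t-x)^2 := by
    intro t ht
    rcases lt_or_ge (dist t x) δ with hd | hd
    · have := hδ t ht x hxI hd
      rw [Real.dist_eq] at this
      nlinarith [sq_nonneg (t-x)]
    · have h1 : |h t| ≤ M := hM t ht
      have h2 : |h x| ≤ M := hM x hxI
      have h3 : δ^2 ≤ (t-x)^2 := by
        rw [← sq_abs (t-x)]
        apply pow_le_pow_left₀ hδ0.le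
        rwa [Real.dist_eq] at hd
      have h4 : c*δ^2 = 2*M+2 := by
        rw [hc, div_mul_cancel₀]
        positivity
      have h5 : c*δ^2 ≤ c*(t-x)^2 := by nlinarith
      calc |h t - h x| ≤ |h t| + |h x| := abs_sub _ _
        _ ≤ 2*M+2 := by linarith
        _ = c*δ^2 := h4.symm
        _ ≤ c*(t-x)^2 := h5
        _ ≤ ε/2 + c*(t-x)^2 := by linarith
  -- eventually the variance term is small
  have hV := var_tendsto x hx0.le hx1.le
  rw [Metric.tendsto_atTop] at hV
  obtain ⟨N, hN⟩ := hV (ε/(2*c)) (by positivity)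
  refine ⟨N, fun α hα => ?_⟩
  have hVs := hN α hα
  rw [Real.dist_eq, sub_zero] at hVs
  set V := ∫ t in (0:ℝ)..1, betaKer α x t * (t-x)^2 with hVdef
  have hcV : c * V < ε/2 := by
    have : |V| < ε/(2*c) := hVs
    have hV' : V < ε/(2*c) := lt_of_le_of_lt (le_abs_self _) this
    calc c * V < c * (ε/(2*c)) := by exact (mul_lt_mul_iff_right₀ hc0).mpr hV'
      _ = ε/2 := by field_simp
  -- integrability facts
  have hkc := betaKer_cont x α
  have ih : IntervalIntegrable (fun t => betaKer α x t * h t) volume 0 1 :=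
    ContinuousOn.intervalIntegrable (by rw [hu]; exact hkc.continuousOn.mul hh)
  have ihx : IntervalIntegrable (fun t => betaKer α x t * h x) volume 0 1 :=
    (hkc.mul continuous_const).intervalIntegrable 0 1
  have idiff : IntervalIntegrable (fun t => betaKer α x t * (h t - h x)) volume 0 1 := by
    have : (fun t => betaKer α x t * (h t - h x))
        = fun t => betaKer α x t * h t - betaKer α x t * h x := funext fun t => by ring
    rw [this]; exact ih.sub ihx
  have irhs : IntervalIntegrable (fun t => betaKer α x t * (ε/2 + c*(t-x)^2)) volume 0 1 :=
    (hkc.mul (continuous_const.add (continuous_const.mul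
      ((continuous_id.sub continuous_const).pow 2)))).intervalIntegrable 0 1
  -- the difference as an integral
  have hdiff : (∫ t in (0:ℝ)..1, betaKer α x t * h t) - h x
      = ∫ t in (0:ℝ)..1, betaKer α x t * (h t - h x) := by
    rw [show (fun t => betaKer α x t * (h t - h x))
        = fun t => betaKer α x t * h t - betaKer α x t * h x from funext fun t => by ring,
      intervalIntegral.integral_sub ih ihx,
      intervalIntegral.integral_mul_const, betaKer_int_one, one_mul]
  -- main estimate
  have hbound : |(∫ t in (0:ℝ)..1, betaKer α x t * h t) - h x| ≤ ε/2 + c*V := by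
    rw [hdiff]
    calc |∫ t in (0:ℝ)..1, betaKer α x t * (h t - h x)|
        ≤ ∫ t in (0:ℝ)..1, |betaKer α x t * (h t - h x)| :=
          intervalIntegral.abs_integral_le_integral_abs zero_le_one
      _ ≤ ∫ t in (0:ℝ)..1, betaKer α x t * (ε/2 + c*(t-x)^2) := by
          apply intervalIntegral.integral_mono_on zero_le_one idiff.abs irhs
          intro t ht
          rw [abs_mul, abs_of_nonneg (betaKer_nonneg x α ht)]
          exact mul_le_mul_of_nonneg_left (hpt t ht) (betaKer_nonneg x α ht)
      _ = ε/2 + c*V := by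
          have e1 : IntervalIntegrable (fun t => (ε/2) * betaKer α x t) volume 0 1 :=
            (continuous_const.mul hkc).intervalIntegrable 0 1
          have e2 : IntervalIntegrable (fun t : ℝ => c * (betaKer α x t * (t-x)^2)) volume 0 1 :=
            (continuous_const.mul (hkc.mul
              ((continuous_id.sub continuous_const).pow 2))).intervalIntegrable 0 1
          have hadd := intervalIntegral.integral_add e1 e2
          rw [show (fun t => betaKer α x t * (ε/2 + c*(t-x)^2))
              = fun t => (ε/2) * betaKer α x t + c * (betaKer α x t * (t-x)^2)
              from funext fun t => by ring, hadd,
            intervalIntegral.integral_const_mul, intervalIntegral.integral_const_mul,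
            betaKer_int_one, mul_one, ← hVdef]
  rw [Real.dist_eq]
  calc |(∫ t in (0:ℝ)..1, betaKer α x t * h t) - h x| ≤ ε/2 + c*V := hbound
    _ < ε/2 + ε/2 := by linarith
    _ = ε := by ring
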